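/- Let σ : [0,∞) → [0,∞) be a C² convex function with σ(0) = 0 whose derivative σ' is concave. Then for all r₁, r₂ > 0 one has 0 ≤ σ(r₁+r₂) − σ(r₁) − σ(r₂) ≤ 2·(r₁·σ(r₂) + r₂·σ(r₁))/(r₁+r₂). -/

import Mathlib

/-- Lemma 2.1, inequality (convex4): for a C² convex function `σ : [0,∞) → [0,∞)`
with `σ 0 = 0` whose derivative is concave,
`0 ≤ σ(r₁+r₂) − σ r₁ − σ r₂ ≤ 2 (r₁ σ(r₂) + r₂ σ(r₁)) / (r₁+r₂)` for all `r₁, r₂ > 0`. -/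
theorem convex4 (σ : ℝ → ℝ)
    (hσ_nonneg : ∀ r ∈ Set.Ici (0:ℝ), 0 ≤ σ r)
    (hσ_C2 : ContDiffOn ℝ 2 σ (Set.Ici 0))
    (hσ_convex : ConvexOn ℝ (Set.Ici 0) σ)
    (hσ_zero : σ 0 = 0)
    (hσ'_concave : ConcaveOn ℝ (Set.Ici 0) (deriv σ)) :
    ∀ r₁ r₂ : ℝ, 0 < r₁ → 0 < r₂ →
      0 ≤ σ (r₁ + r₂) - σ r₁ - σ r₂ ∧
      σ (r₁ + r₂) - σ r₁ - σ r₂ ≤ 2 * (r₁ * σ r₂ + r₂ * σ r₁) / (r₁ + r₂) := by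
  set g := deriv σ with hgdef
  have hσ_cont : ContinuousOn σ (Set.Ici 0) := hσ_C2.continuousOn
  -- σ has derivative g at positive points
  have hdσ : ∀ x : ℝ, 0 < x → HasDerivAt σ (g x) x := by
    intro x hx
    exact ((hσ_C2.contDiffAt (Ici_mem_nhds hx)).differentiableAt
      (by norm_num)).hasDerivAt
  -- g 0 ≥ 0
  have hg0 : 0 ≤ g 0 := by
    by_cases hdiff : DifferentiableAt ℝ σ 0
    · have h := (hdiff.hasDerivAt.hasDerivWithinAt (s := Set.Ioi 0))
      rw [hasDerivWithinAt_iff_tendsto_slope] at h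
      have hss : Set.Ioi (0:ℝ) \ {0} = Set.Ioi 0 := by
        apply Set.diff_singleton_eq_self; simp
      rw [hss] at h
      haveI : (nhdsWithin (0:ℝ) (Set.Ioi 0)).NeBot := nhdsGT_neBot 0
      refine ge_of_tendsto h ?_
      filter_upwards [self_mem_nhdsWithin] with x hx
      have hx' : (0:ℝ) < x := hx
      rw [slope_def_field]
      have : σ x ≥ 0 := hσ_nonneg x hx'.le
      have : (σ x - σ 0) / (x - 0) ≥ 0 := by
        apply div_nonneg <;> [linarith; linarith]
      simpa [div_eq_inv_mul] using this
    · simp [hgdef, deriv_zero_of_not_differentiableAt hdiff]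
  -- superadditivity of σ
  have hσ_mul : ∀ a b : ℝ, 0 < a → 0 < b → σ a ≤ a / (a + b) * σ (a + b) := by
    intro a b ha hb
    have hab : (0:ℝ) < a + b := by linarith
    have hsw : b / (a + b) + a / (a + b) = 1 := by
      rw [← add_div, add_comm, div_self hab.ne']
    have h := hσ_convex.2 (Set.self_mem_Ici (a := (0:ℝ)))
      (show a + b ∈ Set.Ici (0:ℝ) from hab.le)
      (div_nonneg hb.le hab.le) (div_nonneg ha.le hab.le) hsw
    simp only [smul_eq_mul, mul_zero, zero_add] at h
    rw [div_mul_cancel₀ a hab.ne', hσ_zero, mul_zero, zero_add] at h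
    exact h
  -- subadditivity of g
  have hg_subadd : ∀ a b : ℝ, 0 < a → 0 < b → g (a + b) ≤ g a + g b := by
    intro a b ha hb
    have hab : (0:ℝ) < a + b := by linarith
    have haux : ∀ c d : ℝ, 0 < c → 0 < d → c + d = a + b →
        c / (a + b) * g (a + b) ≤ g c := by
      intro c d hc hd hcd
      have hsw : d / (a + b) + c / (a + b) = 1 := by
        rw [← add_div, add_comm, ← hcd]
        exact div_self (by positivity)
      have h := hσ'_concave.2 (Set.self_mem_Ici (a := (0:ℝ)))
        (show a + b ∈ Set.Ici (0:ℝ) from hab.le)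
        (div_nonneg hd.le hab.le) (div_nonneg hc.le hab.le) hsw
      simp only [smul_eq_mul, mul_zero, zero_add] at h
      rw [div_mul_cancel₀ c hab.ne'] at h
      have hd0 : 0 ≤ d / (a + b) * g 0 := by
        apply mul_nonneg (div_nonneg hd.le hab.le) hg0
      linarith
    have h1 := haux a b ha hb rfl
    have h2 := haux b a hb ha (add_comm b a)
    have : a / (a + b) * g (a + b) + b / (a + b) * g (a + b) = g (a + b) := by
      rw [← add_mul, ← add_div, div_self hab.ne', one_mul]
    linarith
  -- key1 : σ (a+b) - σ a - σ b ≤ b * g a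
  have key1 : ∀ a b : ℝ, 0 < a → 0 < b → σ (a + b) - σ a - σ b ≤ b * g a := by
    intro a b ha hb
    have hderiv : ∀ t ∈ Set.Ioo (0:ℝ) b,
        HasDerivAt (fun t => σ (a + t) - σ t - t * g a)
          (g (a + t) - g t - g a) t := by
      intro t ht
      have h1 : HasDerivAt (fun t => σ (a + t)) (g (a + t)) t := by
        have := (hdσ (a + t) (by linarith [ht.1])).comp t
          ((hasDerivAt_id t).const_add a)
        simpa [Function.comp_def] using this
      exact (h1.sub (hdσ t ht.1)).sub (hasDerivAt_mul_const (g a))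
    have hcont : ContinuousOn (fun t => σ (a + t) - σ t - t * g a)
        (Set.Icc 0 b) := by
      apply ContinuousOn.sub
      apply ContinuousOn.sub
      · exact hσ_cont.comp (continuous_const.add continuous_id).continuousOn
          (fun t ht => by simp only [Set.mem_Ici]; linarith [ht.1])
      · exact hσ_cont.mono (fun t ht => ht.1)
      · exact (continuous_id.mul continuous_const).continuousOn
    have hanti : AntitoneOn (fun t => σ (a + t) - σ t - t * g a)
        (Set.Icc 0 b) := by
      apply antitoneOn_of_deriv_nonpos (convex_Icc 0 b) hcont
      · intro t ht
        rw [interior_Icc] at ht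
        exact ((hderiv t ht).differentiableAt).differentiableWithinAt
      · intro t ht
        rw [interior_Icc] at ht
        rw [(hderiv t ht).deriv]
        have := hg_subadd a t ha ht.1
        linarith
    have h := hanti (Set.left_mem_Icc.2 hb.le) (Set.right_mem_Icc.2 hb.le) hb.le
    simp only [add_zero, hσ_zero, zero_mul, sub_zero] at h
    linarith
  -- key3 : r * g r ≤ 2 * σ r
  have key3 : ∀ r : ℝ, 0 < r → r * g r ≤ 2 * σ r := by
    intro r hr
    have hchord : ∀ t : ℝ, 0 < t → t < r → t / r * g r ≤ g t := by
      intro t ht htr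
      have hsw : (1 - t / r) + t / r = 1 := by ring
      have htr' : t / r ≤ 1 := (div_le_one hr).2 htr.le
      have h := hσ'_concave.2 (Set.self_mem_Ici (a := (0:ℝ)))
        (show r ∈ Set.Ici (0:ℝ) from hr.le)
        (by linarith) (div_nonneg ht.le hr.le) hsw
      simp only [smul_eq_mul, mul_zero, zero_add] at h
      rw [div_mul_cancel₀ t hr.ne'] at h
      have : 0 ≤ (1 - t / r) * g 0 := mul_nonneg (by linarith) hg0
      linarith
    have hderiv : ∀ t ∈ Set.Ioo (0:ℝ) r,
        HasDerivAt (fun t => σ t - t ^ 2 / (2 * r) * g r)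
          (g t - 2 * t ^ 1 / (2 * r) * g r) t := by
      intro t ht
      exact (hdσ t ht.1).sub
        (((hasDerivAt_pow 2 t).div_const (2 * r)).mul_const (g r))
    have hmono : MonotoneOn (fun t => σ t - t ^ 2 / (2 * r) * g r)
        (Set.Icc 0 r) := by
      apply monotoneOn_of_deriv_nonneg (convex_Icc 0 r)
      · exact (hσ_cont.mono (fun t ht => ht.1)).sub
          ((continuous_pow 2).continuousOn.div_const _ |>.mul continuousOn_const)
      · intro t ht
        rw [interior_Icc] at ht
        exact ((hderiv t ht).differentiableAt).differentiableWithinAt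
      · intro t ht
        rw [interior_Icc] at ht
        rw [(hderiv t ht).deriv]
        have h := hchord t ht.1 ht.2
        have : 2 * t ^ 1 / (2 * r) * g r = t / r * g r := by
          rw [pow_one]; ring_nf
        rw [this]
        linarith
    have h := hmono (Set.left_mem_Icc.2 hr.le) (Set.right_mem_Icc.2 hr.le) hr.le
    simp only [hσ_zero] at h
    have h0 : (0:ℝ) ^ 2 / (2 * r) * g r = 0 := by simp
    rw [h0] at h
    have hr2 : r ^ 2 / (2 * r) = r / 2 := by
      rw [pow_two]; field_simp
    rw [hr2] at h
    nlinarith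
  -- main
  intro r₁ r₂ hr₁ hr₂
  have hsum : (0:ℝ) < r₁ + r₂ := by linarith
  constructor
  · have h1 := hσ_mul r₁ r₂ hr₁ hr₂
    have h2 := hσ_mul r₂ r₁ hr₂ hr₁
    rw [add_comm r₂ r₁] at h2
    have hfrac : r₁ / (r₁ + r₂) + r₂ / (r₁ + r₂) = 1 := by
      rw [← add_div, div_self hsum.ne']
    nlinarith [hσ_nonneg (r₁ + r₂) hsum.le]
  · have h1 := key1 r₁ r₂ hr₁ hr₂
    have h2 := key1 r₂ r₁ hr₂ hr₁
    rw [add_comm r₂ r₁] at h2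
    have h3 := key3 r₁ hr₁
    have h4 := key3 r₂ hr₂
    rw [le_div_iff₀ hsum]
    nlinarith [mul_pos hr₁ hr₂]
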